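/- Let k ≥ 2, let F_k be the free group on x_1, …, x_k, and let G = F_k × F_k with finite generating set X = {(x_i, 1) : 1 ≤ i ≤ k} ∪ {(1, x_i) : 1 ≤ i ≤ k}. Then there exist a constant c > 0 and N ∈ ℕ such that for all n ≥ N, the number of commuting pairs satisfies |{(x,y) ∈ B_{G,X}(n)² : xy = yx}| ≥ c·|B_{G,X}(n)|²/n². In particular, the sequence d_n = |{(x,y) ∈ B_{G,X}(n)² : xy = yx}|/|B_{G,X}(n)|² converges to zero at most polynomially fast. -/

import Mathlib

/-- The word length of `g` with respect to a generating set `X`: the least `n` such that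
`g` is a product of `n` elements of `X ∪ X⁻¹`. -/
noncomputable def wordLength {G : Type*} [Group G] (X : Set G) (g : G) : ℕ :=
  sInf {n | ∃ l : List G, l.length = n ∧ (∀ x ∈ l, x ∈ X ∨ x⁻¹ ∈ X) ∧ l.prod = g}

/-- The ball of radius `n` in `G` with respect to `X`. -/
noncomputable def ball {G : Type*} [Group G] (X : Set G) (n : ℕ) : Set G :=
  {g | wordLength X g ≤ n}

section Generic

variable {G : Type*} [Group G] {X : Set G}

lemma wordLength_le {g : G} {l : List G} (hl : ∀ x ∈ l, x ∈ X ∨ x⁻¹ ∈ X)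
    (hp : l.prod = g) : wordLength X g ≤ l.length :=
  Nat.sInf_le ⟨l, rfl, hl, hp⟩

lemma wordLength_one : wordLength X (1 : G) = 0 :=
  Nat.le_zero.mp (wordLength_le (l := []) (by simp) rfl)

/-- If `X` generates, every element has a minimal-length list. -/
lemma exists_min_list
    (hgen : ∀ h : G, ∃ l : List G, (∀ x ∈ l, x ∈ X ∨ x⁻¹ ∈ X) ∧ l.prod = h) (g : G) :
    ∃ l : List G, l.length = wordLength X g ∧ (∀ x ∈ l, x ∈ X ∨ x⁻¹ ∈ X) ∧ l.prod = g := by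
  have hne : {n | ∃ l : List G, l.length = n ∧ (∀ x ∈ l, x ∈ X ∨ x⁻¹ ∈ X) ∧
      l.prod = g}.Nonempty := by
    obtain ⟨l, h1, h2⟩ := hgen g
    exact ⟨l.length, l, rfl, h1, h2⟩
  exact Nat.sInf_mem hne

lemma wordLength_mul_le
    (hgen : ∀ h : G, ∃ l : List G, (∀ x ∈ l, x ∈ X ∨ x⁻¹ ∈ X) ∧ l.prod = h) (g h : G) :
    wordLength X (g * h) ≤ wordLength X g + wordLength X h := by
  obtain ⟨lg, hlg, hg1, hg2⟩ := exists_min_list hgen g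
  obtain ⟨lh, hlh, hh1, hh2⟩ := exists_min_list hgen h
  have := wordLength_le (X := X) (g := g * h) (l := lg ++ lh) ?_ ?_
  · simpa [hlg, hlh] using this
  · intro x hx
    rcases List.mem_append.mp hx with h' | h'
    · exact hg1 x h'
    · exact hh1 x h'
  · simp [hg2, hh2]

end Generic

section Free

variable {β : Type*} [DecidableEq β]

open FreeGroup

lemma gen_free (g : FreeGroup β) :
    ∃ l : List (FreeGroup β),
      (∀ x ∈ l, x ∈ Set.range (FreeGroup.of (α := β)) ∨
        x⁻¹ ∈ Set.range (FreeGroup.of (α := β))) ∧ l.prod = g := by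
  have hg : g ∈ Subgroup.closure (Set.range (FreeGroup.of (α := β))) := by
    rw [FreeGroup.closure_range_of]; trivial
  rw [← Subgroup.mem_toSubmonoid, Subgroup.closure_toSubmonoid] at hg
  obtain ⟨l, h1, h2⟩ := Submonoid.exists_list_of_mem_closure hg
  refine ⟨l, fun x hx => ?_, h2⟩
  rcases h1 x hx with h | h
  · exact Or.inl h
  · exact Or.inr (Set.mem_inv.mp h)

lemma toWord_length_le_list {l : List (FreeGroup β)}
    (hl : ∀ x ∈ l, x ∈ Set.range (FreeGroup.of (α := β)) ∨
      x⁻¹ ∈ Set.range (FreeGroup.of (α := β))) :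
    (l.prod.toWord).length ≤ l.length := by
  induction l with
  | nil => simp
  | cons x t ih =>
    have hx : (x.toWord).length ≤ 1 := by
      rcases hl x (by simp) with ⟨i, hi⟩ | ⟨i, hi⟩
      · rw [← hi]; simp
      · have : x = (FreeGroup.of i)⁻¹ := by rw [← inv_inv x, hi]
        rw [this, toWord_inv, invRev_length]; simp
    have ht := ih (fun y hy => hl y (List.mem_cons_of_mem _ hy))
    have := (toWord_mul_sublist x t.prod).length_le
    rw [List.length_append] at this
    simp only [List.prod_cons, List.length_cons]
    omega

lemma toWord_length_le (g : FreeGroup β) :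
    (g.toWord).length ≤ wordLength (Set.range (FreeGroup.of (α := β))) g := by
  obtain ⟨l, hlen, h1, h2⟩ := exists_min_list gen_free g
  rw [← hlen, ← h2]
  exact toWord_length_le_list h1

lemma prod_map_cond (w : List (β × Bool)) :
    (w.map fun x => cond x.2 (FreeGroup.of x.1) (FreeGroup.of x.1)⁻¹).prod
      = FreeGroup.mk w := by
  induction w with
  | nil => simp [FreeGroup.one_eq_mk]
  | cons x t ih =>
    have hx : (cond x.2 (FreeGroup.of x.1) (FreeGroup.of x.1)⁻¹) = FreeGroup.mk [x] := by
      obtain ⟨a, b⟩ := x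
      cases b
      · show (FreeGroup.of a)⁻¹ = _
        rw [FreeGroup.of, FreeGroup.inv_mk]
        simp [FreeGroup.invRev]
      · rfl
    have : (x :: t) = [x] ++ t := rfl
    rw [this, ← FreeGroup.mul_mk, List.map_append, List.prod_append, ih]
    simp [hx]

lemma wordLength_mk_le (w : List (β × Bool)) :
    wordLength (Set.range (FreeGroup.of (α := β))) (FreeGroup.mk w) ≤ w.length := by
  have := wordLength_le (X := Set.range (FreeGroup.of (α := β)))
    (l := w.map fun x => cond x.2 (FreeGroup.of x.1) (FreeGroup.of x.1)⁻¹)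
    ?_ (prod_map_cond w)
  · simpa using this
  · intro x hx
    simp only [List.mem_map] at hx
    obtain ⟨y, _, rfl⟩ := hx
    cases hy : y.2 <;> simp

end Free

section Reduced

open FreeGroup

variable {β : Type*} [DecidableEq β]

/-- a word is reduced: no adjacent cancelling pair. -/
def IsRed (w : List (β × Bool)) : Prop :=
  w.Chain' fun x y => ¬(x.1 = y.1 ∧ x.2 = !y.2)

lemma isRed_nil : IsRed ([] : List (β × Bool)) := List.isChain_nil

lemma reduce_eq_self_of_isRed : ∀ {w : List (β × Bool)}, IsRed w → reduce w = w
  | [], _ => rfl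
  | [x], _ => rfl
  | x :: y :: t, h => by
    rw [IsRed, List.Chain', List.isChain_cons_cons] at h
    have ht := reduce_eq_self_of_isRed (w := y :: t) h.2
    rw [reduce.cons, ht]
    show (if x.1 = y.1 ∧ x.2 = !y.2 then t else x :: y :: t) = x :: y :: t
    rw [if_neg h.1]

lemma isRed_of_reduce_eq_self : ∀ {w : List (β × Bool)}, reduce w = w → IsRed w
  | [], _ => isRed_nil
  | x :: t, h => by
    have hred : (reduce t).length ≤ t.length := (reduce.red (L := t)).length_le
    rw [reduce.cons] at h
    rcases hrt : reduce t with _ | ⟨y, ys⟩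
    · rw [hrt] at h
      have h' : [x] = x :: t := h
      have : t = [] := by simpa using h'
      subst this
      simp [IsRed, List.Chain']
    · rw [hrt] at h
      have h' : (if x.1 = y.1 ∧ x.2 = !y.2 then ys else x :: y :: ys) = x :: t := h
      by_cases hc : x.1 = y.1 ∧ x.2 = !y.2
      · rw [if_pos hc] at h'
        rw [hrt] at hred
        have h1 : ys.length = t.length + 1 := by rw [h']; simp
        simp only [List.length_cons] at hred
        omega
      · rw [if_neg hc] at h'
        have h2 : t = y :: ys := by simpa using h'.symm
        have ht : IsRed t := isRed_of_reduce_eq_self (by rw [hrt, h2])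
        rw [IsRed, List.Chain', List.isChain_cons]
        refine ⟨fun z hz => ?_, ht⟩
        rw [h2] at hz
        simp only [List.head?_cons, Option.mem_def, Option.some.injEq] at hz
        rw [← hz]
        exact hc

lemma isRed_toWord (g : FreeGroup β) : IsRed g.toWord :=
  isRed_of_reduce_eq_self (reduce_toWord g)

lemma mk_injOn_isRed {w v : List (β × Bool)} (hw : IsRed w) (hv : IsRed v)
    (h : FreeGroup.mk w = FreeGroup.mk v) : w = v := by
  have := congrArg FreeGroup.toWord h
  rwa [toWord_mk, toWord_mk, reduce_eq_self_of_isRed hw, reduce_eq_self_of_isRed hv] at this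

end Reduced

section Builder

open FreeGroup

variable {k : ℕ}

/-- Equivalence of the alphabet with `Fin (2k-1+1)`. -/
noncomputable def alphaEquiv (hk : 1 ≤ k) : (Fin k × Bool) ≃ Fin (2 * k - 1 + 1) :=
  Fintype.equivFinOfCardEq (by simp [Fintype.card_prod]; omega)

/-- The letter cancelling `x`. -/
def forb (x : Fin k × Bool) : Fin k × Bool := (x.1, !x.2)

lemma eq_forb_iff (x y : Fin k × Bool) : (x.1 = y.1 ∧ x.2 = !y.2) ↔ y = forb x := by
  obtain ⟨a, b⟩ := x; obtain ⟨c, d⟩ := y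
  simp only [forb, Prod.mk.injEq]
  cases b <;> cases d <;> simp [eq_comm]

/-- Given the previous letter `p`, the `j`-th letter distinct from `forb p`. -/
noncomputable def step (hk : 1 ≤ k) (p : Fin k × Bool) (j : Fin (2 * k - 1)) :
    Fin k × Bool :=
  (alphaEquiv hk).symm ((alphaEquiv hk (forb p)).succAbove j)

lemma step_ne_forb (hk : 1 ≤ k) (p : Fin k × Bool) (j : Fin (2 * k - 1)) :
    step hk p j ≠ forb p := by
  intro h
  have := congrArg (alphaEquiv hk) h
  simp only [step, Equiv.apply_symm_apply] at this
  exact Fin.succAbove_ne _ _ this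

lemma step_injective (hk : 1 ≤ k) (p : Fin k × Bool) :
    Function.Injective (step hk p) := by
  intro a b h
  simp only [step] at h
  exact Fin.succAbove_right_injective (p := alphaEquiv hk (forb p))
    ((alphaEquiv hk).symm.injective h)

lemma step_surj (hk : 1 ≤ k) (p y : Fin k × Bool) (hy : y ≠ forb p) :
    ∃ j, step hk p j = y := by
  obtain ⟨j, hj⟩ := Fin.exists_succAbove_eq
    (x := alphaEquiv hk y) (y := alphaEquiv hk (forb p))
    (by simpa using hy)
  exact ⟨j, by simp [step, hj]⟩

/-- Building a reduced word from a sequence of choices, starting after letter `p`. -/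
noncomputable def build (hk : 1 ≤ k) : (Fin k × Bool) → List (Fin (2 * k - 1)) →
    List (Fin k × Bool)
  | _, [] => []
  | p, j :: js => step hk p j :: build hk (step hk p j) js

lemma build_length (hk : 1 ≤ k) :
    ∀ (js : List (Fin (2 * k - 1))) (p), (build hk p js).length = js.length
  | [], _ => rfl
  | j :: js, p => by simp [build, build_length hk js]

lemma build_isRed (hk : 1 ≤ k) :
    ∀ (js : List (Fin (2 * k - 1))) (p), IsRed (p :: build hk p js)
  | [], _ => by simp [IsRed, build, List.Chain']
  | j :: js, p => by
    rw [build, IsRed, List.Chain', List.isChain_cons_cons]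
    refine ⟨?_, build_isRed hk js (step hk p j)⟩
    rw [eq_forb_iff]
    exact step_ne_forb hk p j

lemma build_injective (hk : 1 ≤ k) :
    ∀ (js₁ js₂ : List (Fin (2 * k - 1))) (p), build hk p js₁ = build hk p js₂ → js₁ = js₂
  | [], [], _, _ => rfl
  | [], _ :: _, _, h => by simp [build] at h
  | _ :: _, [], _, h => by simp [build] at h
  | j₁ :: t₁, j₂ :: t₂, p, h => by
    rw [build, build] at h
    simp only [List.cons.injEq] at h
    obtain ⟨h1, h2⟩ := h
    have hj : j₁ = j₂ := step_injective hk p h1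
    subst hj
    rw [build_injective hk t₁ t₂ _ h2]

lemma build_surj (hk : 1 ≤ k) :
    ∀ (t : List (Fin k × Bool)) (p), IsRed (p :: t) → ∃ js, build hk p js = t
  | [], _, _ => ⟨[], rfl⟩
  | y :: t, p, h => by
    rw [IsRed, List.Chain', List.isChain_cons_cons] at h
    obtain ⟨j, hj⟩ := step_surj hk p y (fun hy => h.1 ((eq_forb_iff p y).mpr hy))
    obtain ⟨js, hjs⟩ := build_surj hk t y h.2
    exact ⟨j :: js, by rw [build, hj, hjs]⟩

end Builder

section Counting

open FreeGroup

variable {k : ℕ}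

/-- Reduced words of length exactly `m`. -/
def RW (k m : ℕ) : Set (List (Fin k × Bool)) := {w | w.length = m ∧ IsRed w}

lemma RW_finite (m : ℕ) : (RW k m).Finite :=
  (List.finite_length_eq _ m).subset fun _ h => h.1

lemma card_RW_zero : Nat.card (RW k 0) ≤ 1 := by
  have h : RW k 0 ⊆ {[]} := by
    rintro w ⟨hw, -⟩
    simp [List.length_eq_zero_iff.mp hw]
  calc Nat.card (RW k 0) ≤ Nat.card ({[]} : Set (List (Fin k × Bool))) :=
        Nat.card_mono (Set.finite_singleton _) h
    _ = 1 := by simp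

lemma card_RW_succ (hk : 1 ≤ k) (m : ℕ) :
    Nat.card (RW k (m + 1)) ≤ 2 * k * (2 * k - 1) ^ m := by
  haveI : Finite (RW k (m + 1)) := (RW_finite (m + 1)).to_subtype
  have hsurj : Function.Surjective
      (fun pv : (Fin k × Bool) × (Fin m → Fin (2 * k - 1)) =>
        (⟨pv.1 :: build hk pv.1 (List.ofFn pv.2), by
          constructor
          · simp [build_length hk]
          · exact build_isRed hk _ _⟩ : RW k (m + 1))) := by
    rintro ⟨w, hw1, hw2⟩
    rcases w with _ | ⟨p, t⟩
    · simp at hw1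
    · obtain ⟨js, hjs⟩ := build_surj hk t p hw2
      have hlen : js.length = m := by
        have := build_length hk js p
        rw [hjs] at this
        simpa [this] using hw1
      subst hlen
      refine ⟨⟨p, js.get⟩, ?_⟩
      simp only [List.ofFn_get, hjs]
  have := Nat.card_le_card_of_surjective _ hsurj
  calc Nat.card (RW k (m + 1)) ≤
      Nat.card ((Fin k × Bool) × (Fin m → Fin (2 * k - 1))) := this
    _ = 2 * k * (2 * k - 1) ^ m := by
      simp [Nat.card_eq_fintype_card, Fintype.card_fun, mul_comm]

lemma card_RW_le (hk : 1 ≤ k) (m : ℕ) :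
    Nat.card (RW k m) ≤ 2 * (2 * k - 1) ^ m := by
  cases m with
  | zero => exact le_trans (card_RW_zero (k := k)) (by simp)
  | succ m =>
    have h1 := card_RW_succ hk m
    have h2 : 2 * k * (2 * k - 1) ^ m ≤ 2 * (2 * k - 1) ^ (m + 1) := by
      rw [pow_succ]
      have : 2 * k ≤ 2 * (2 * k - 1) := by omega
      calc 2 * k * (2 * k - 1) ^ m ≤ 2 * (2 * k - 1) * (2 * k - 1) ^ m :=
            Nat.mul_le_mul_right _ this
        _ = 2 * ((2 * k - 1) ^ m * (2 * k - 1)) := by ring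
    exact h1.trans h2
  
lemma nat_card_sigma {m : ℕ} (f : Fin m → Type*) [∀ i, Finite (f i)] :
    Nat.card ((i : Fin m) × f i) = ∑ i, Nat.card (f i) := by
  classical
  letI := fun i => Fintype.ofFinite (f i)
  simp [Nat.card_eq_fintype_card]

end Counting

section BallF

open FreeGroup

variable {k : ℕ}

/-- The standard generating set of the free group. -/
def SS (k : ℕ) : Set (FreeGroup (Fin k)) := Set.range FreeGroup.of

lemma ballF_finite (m : ℕ) : (ball (SS k) m).Finite := by
  apply Set.Finite.of_finite_image (f := FreeGroup.toWord)
  · apply (List.finite_length_le (Fin k × Bool) m).subset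
    rintro w ⟨g, hg, rfl⟩
    exact le_trans (toWord_length_le g) hg
  · exact FreeGroup.toWord_injective.injOn

lemma myGeom_le {q : ℕ} (hq : 2 ≤ q) (m : ℕ) :
    ∑ i ∈ Finset.range (m + 1), q ^ i ≤ 2 * q ^ m := by
  induction m with
  | zero => simp
  | succ m ih =>
    rw [Finset.sum_range_succ]
    have h2 : 2 * q ^ m + q ^ (m + 1) ≤ 2 * q ^ (m + 1) := by
      rw [pow_succ, two_mul, two_mul]
      have : q ^ m * 2 ≤ q ^ m * q := Nat.mul_le_mul_left _ hq
      omega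
    omega

lemma card_ballF_le (hk : 2 ≤ k) (m : ℕ) :
    Nat.card (ball (SS k) m) ≤ 4 * (2 * k - 1) ^ m := by
  classical
  haveI : ∀ i : Fin (m + 1), Finite (RW k i) := fun i => (RW_finite i).to_subtype
  haveI : Finite ((i : Fin (m + 1)) × RW k i) := inferInstance
  set φ : ball (SS k) m → (i : Fin (m + 1)) × RW k i := fun g =>
    ⟨⟨(FreeGroup.toWord g.1).length,
        Nat.lt_succ_of_le (le_trans (toWord_length_le g.1) g.2)⟩,
      ⟨FreeGroup.toWord g.1, rfl, isRed_toWord _⟩⟩ with hφ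
  have hinj : Function.Injective φ := by
    intro a b h
    have := congrArg (fun x : (i : Fin (m + 1)) × RW k i =>
      (x.2 : List (Fin k × Bool))) h
    change FreeGroup.toWord a.1 = FreeGroup.toWord b.1 at this
    exact Subtype.ext (FreeGroup.toWord_injective this)
  have h1 := Nat.card_le_card_of_injective φ hinj
  rw [nat_card_sigma] at h1
  have h2 : ∑ i : Fin (m + 1), Nat.card (RW k (i : ℕ)) ≤
      ∑ i : Fin (m + 1), 2 * (2 * k - 1) ^ (i : ℕ) :=
    Finset.sum_le_sum fun i _ => card_RW_le (by omega) _
  have h3 : ∑ i : Fin (m + 1), 2 * (2 * k - 1) ^ (i : ℕ) =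
      2 * ∑ i ∈ Finset.range (m + 1), (2 * k - 1) ^ i := by
    rw [Fin.sum_univ_eq_sum_range (fun i => 2 * (2 * k - 1) ^ i) (m + 1), Finset.mul_sum]
  have h4 := myGeom_le (q := 2 * k - 1) (by omega) m
  omega

lemma card_ballF_ge (hk : 1 ≤ k) (m : ℕ) :
    (2 * k - 1) ^ m ≤ Nat.card (ball (SS k) (m + 1)) := by
  classical
  haveI : Finite (ball (SS k) (m + 1)) := (ballF_finite (m + 1)).to_subtype
  set p₀ : Fin k × Bool := (⟨0, hk⟩, true) with hp₀
  set θ : (Fin m → Fin (2 * k - 1)) → ball (SS k) (m + 1) := fun v =>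
    ⟨FreeGroup.mk (p₀ :: build hk p₀ (List.ofFn v)), by
      have h := wordLength_mk_le (β := Fin k) (p₀ :: build hk p₀ (List.ofFn v))
      have hl : (p₀ :: build hk p₀ (List.ofFn v)).length = m + 1 := by
        simp [build_length hk]
      show wordLength (SS k) _ ≤ m + 1
      rw [SS]
      omega⟩ with hθ
  have hinj : Function.Injective θ := by
    intro a b h
    rw [hθ, Subtype.mk.injEq] at h
    have hw := mk_injOn_isRed (build_isRed hk _ _) (build_isRed hk _ _) h
    simp only [List.cons.injEq, true_and] at hw
    exact List.ofFn_injective (build_injective hk _ _ _ hw)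
  have := Nat.card_le_card_of_injective θ hinj
  calc (2 * k - 1) ^ m = Nat.card (Fin m → Fin (2 * k - 1)) := by
        simp [Nat.card_eq_fintype_card]
    _ ≤ _ := this

end BallF

section Product

open FreeGroup

variable {k : ℕ} {X : Set (FreeGroup (Fin k) × FreeGroup (Fin k))}

variable (hX : X = (Set.range fun i : Fin k =>
      ((FreeGroup.of i : FreeGroup (Fin k)), (1 : FreeGroup (Fin k)))) ∪
    (Set.range fun i : Fin k =>
      ((1 : FreeGroup (Fin k)), (FreeGroup.of i : FreeGroup (Fin k)))))

include hX

lemma left_mem_ballX {a : FreeGroup (Fin k)} {n : ℕ} (ha : a ∈ ball (SS k) n) :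
    ((a, 1) : FreeGroup (Fin k) × FreeGroup (Fin k)) ∈ ball X n := by
  obtain ⟨l, hlen, h1, h2⟩ := exists_min_list gen_free a
  have hle : l.length ≤ n := by rw [hlen]; exact ha
  have hprod : (l.map fun s => ((s : FreeGroup (Fin k)), (1 : FreeGroup (Fin k)))).prod
      = (a, 1) := by
    have := List.prod_hom l (MonoidHom.inl (FreeGroup (Fin k)) (FreeGroup (Fin k)))
    rw [h2] at this; exact this
  have hmem : ∀ x ∈ (l.map fun s => ((s : FreeGroup (Fin k)), (1 : FreeGroup (Fin k)))),
      x ∈ X ∨ x⁻¹ ∈ X := by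
    rintro x hx
    simp only [List.mem_map] at hx
    obtain ⟨s, hs, rfl⟩ := hx
    rcases h1 s hs with ⟨i, hi⟩ | ⟨i, hi⟩
    · exact Or.inl (by rw [hX]; exact Or.inl ⟨i, by simp [hi]⟩)
    · right
      rw [hX]
      refine Or.inl ⟨i, ?_⟩
      simp [Prod.ext_iff, hi]
  have := wordLength_le hmem hprod
  show wordLength X _ ≤ n
  simp only [List.length_map] at this
  omega

lemma right_mem_ballX {b : FreeGroup (Fin k)} {n : ℕ} (hb : b ∈ ball (SS k) n) :
    ((1, b) : FreeGroup (Fin k) × FreeGroup (Fin k)) ∈ ball X n := by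
  obtain ⟨l, hlen, h1, h2⟩ := exists_min_list gen_free b
  have hle : l.length ≤ n := by rw [hlen]; exact hb
  have hprod : (l.map fun s => ((1 : FreeGroup (Fin k)), (s : FreeGroup (Fin k)))).prod
      = (1, b) := by
    have := List.prod_hom l (MonoidHom.inr (FreeGroup (Fin k)) (FreeGroup (Fin k)))
    rw [h2] at this; exact this
  have hmem : ∀ x ∈ (l.map fun s => ((1 : FreeGroup (Fin k)), (s : FreeGroup (Fin k)))),
      x ∈ X ∨ x⁻¹ ∈ X := by
    rintro x hx
    simp only [List.mem_map] at hx
    obtain ⟨s, hs, rfl⟩ := hx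
    rcases h1 s hs with ⟨i, hi⟩ | ⟨i, hi⟩
    · exact Or.inl (by rw [hX]; exact Or.inr ⟨i, by simp [hi]⟩)
    · right
      rw [hX]
      refine Or.inr ⟨i, ?_⟩
      simp [Prod.ext_iff, hi]
  have := wordLength_le hmem hprod
  show wordLength X _ ≤ n
  simp only [List.length_map] at this
  omega

lemma gen_X : ∀ g : FreeGroup (Fin k) × FreeGroup (Fin k),
    ∃ l : List (FreeGroup (Fin k) × FreeGroup (Fin k)),
      (∀ x ∈ l, x ∈ X ∨ x⁻¹ ∈ X) ∧ l.prod = g := by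
  rintro ⟨a, b⟩
  obtain ⟨la, ha1, ha2⟩ := gen_free a
  obtain ⟨lb, hb1, hb2⟩ := gen_free b
  refine ⟨(la.map fun s => (s, 1)) ++ (lb.map fun s => ((1 : FreeGroup (Fin k)), s)),
    ?_, ?_⟩
  · intro x hx
    rcases List.mem_append.mp hx with h | h
    · simp only [List.mem_map] at h
      obtain ⟨s, hs, rfl⟩ := h
      rcases ha1 s hs with ⟨i, hi⟩ | ⟨i, hi⟩
      · exact Or.inl (by rw [hX]; exact Or.inl ⟨i, by simp [hi]⟩)
      · exact Or.inr (by rw [hX]; exact Or.inl ⟨i, by simp [Prod.ext_iff, hi]⟩)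
    · simp only [List.mem_map] at h
      obtain ⟨s, hs, rfl⟩ := h
      rcases hb1 s hs with ⟨i, hi⟩ | ⟨i, hi⟩
      · exact Or.inl (by rw [hX]; exact Or.inr ⟨i, by simp [hi]⟩)
      · exact Or.inr (by rw [hX]; exact Or.inr ⟨i, by simp [Prod.ext_iff, hi]⟩)
  · rw [List.prod_append]
    have h1 : (la.map fun s => ((s : FreeGroup (Fin k)), (1 : FreeGroup (Fin k)))).prod
        = (a, 1) := by
      exact (List.prod_hom la (MonoidHom.inl (FreeGroup (Fin k)) (FreeGroup (Fin k)))).trans (by rw [ha2]; rfl)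
    have h2 : (lb.map fun s => ((1 : FreeGroup (Fin k)), (s : FreeGroup (Fin k)))).prod
        = (1, b) := by
      exact (List.prod_hom lb (MonoidHom.inr (FreeGroup (Fin k)) (FreeGroup (Fin k)))).trans (by rw [hb2]; rfl)
    rw [h1, h2]
    simp [Prod.ext_iff]

omit hX in
lemma wordLength_single {g : FreeGroup (Fin k)} (h : g ∈ SS k ∨ g⁻¹ ∈ SS k) :
    wordLength (SS k) g ≤ 1 :=
  wordLength_le (l := [g]) (by simpa using h) (by simp)

lemma decompX {a b : FreeGroup (Fin k)} {n : ℕ}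
    (h : ((a, b) : FreeGroup (Fin k) × FreeGroup (Fin k)) ∈ ball X n) :
    wordLength (SS k) a + wordLength (SS k) b ≤ n := by
  obtain ⟨l, hlen, h1, h2⟩ := exists_min_list (gen_X hX) (a, b)
  have hle : l.length ≤ n := by rw [hlen]; exact h
  suffices H : ∀ l : List (FreeGroup (Fin k) × FreeGroup (Fin k)),
      (∀ x ∈ l, x ∈ X ∨ x⁻¹ ∈ X) →
      wordLength (SS k) l.prod.1 + wordLength (SS k) l.prod.2 ≤ l.length by
    have := H l h1
    rw [h2] at this
    simpa using this.trans hle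
  intro l
  induction l with
  | nil => intro _; simp [wordLength_one]
  | cons x t ih =>
    intro hmem
    have ht := ih fun y hy => hmem y (List.mem_cons_of_mem _ hy)
    have hx : wordLength (SS k) x.1 + wordLength (SS k) x.2 ≤ 1 := by
      rcases hmem x (by simp) with hx' | hx'
      · rw [hX] at hx'
        rcases hx' with ⟨i, hi⟩ | ⟨i, hi⟩
        · rw [← hi]
          simpa [wordLength_one] using wordLength_single (Or.inl ⟨i, rfl⟩)
        · rw [← hi]
          simpa [wordLength_one] using wordLength_single (Or.inl ⟨i, rfl⟩)
      · rw [hX] at hx'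
        rcases hx' with ⟨i, hi⟩ | ⟨i, hi⟩
        · have hxe : x = ((FreeGroup.of i)⁻¹, 1) := by
            rw [← inv_inv x, ← hi]; simp [Prod.ext_iff]
          rw [hxe]
          simpa [wordLength_one] using wordLength_single (Or.inr (by simp; exact ⟨i, rfl⟩))
        · have hxe : x = (1, (FreeGroup.of i)⁻¹) := by
            rw [← inv_inv x, ← hi]; simp [Prod.ext_iff]
          rw [hxe]
          simpa [wordLength_one] using wordLength_single (Or.inr (by simp; exact ⟨i, rfl⟩))
    have hmul1 : wordLength (SS k) (x.1 * t.prod.1) ≤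
        wordLength (SS k) x.1 + wordLength (SS k) t.prod.1 :=
      wordLength_mul_le gen_free _ _
    have hmul2 : wordLength (SS k) (x.2 * t.prod.2) ≤
        wordLength (SS k) x.2 + wordLength (SS k) t.prod.2 :=
      wordLength_mul_le gen_free _ _
    simp only [List.prod_cons, List.length_cons, Prod.fst_mul, Prod.snd_mul]
    omega

lemma ballX_subset {n : ℕ} :
    ball X n ⊆ (ball (SS k) n) ×ˢ (ball (SS k) n) := by
  rintro ⟨a, b⟩ h
  have := decompX hX h
  constructor
  · show wordLength (SS k) a ≤ n; omega
  · show wordLength (SS k) b ≤ n; omega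

lemma ballX_finite (n : ℕ) : (ball X n).Finite :=
  ((ballF_finite n).prod (ballF_finite n)).subset (ballX_subset hX)

end Product

section Main

open FreeGroup

variable {k : ℕ} {X : Set (FreeGroup (Fin k) × FreeGroup (Fin k))}

variable (hX : X = (Set.range fun i : Fin k =>
      ((FreeGroup.of i : FreeGroup (Fin k)), (1 : FreeGroup (Fin k)))) ∪
    (Set.range fun i : Fin k =>
      ((1 : FreeGroup (Fin k)), (FreeGroup.of i : FreeGroup (Fin k)))))

include hX

lemma card_ballX_le (hk : 2 ≤ k) (n : ℕ) :
    Nat.card (ball X n) ≤ 16 * (n + 1) * (2 * k - 1) ^ n := by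
  classical
  haveI hB : ∀ m : ℕ, Finite (ball (SS k) m) := fun m => (ballF_finite m).to_subtype
  haveI hFin : ∀ i : Fin (n + 1),
      Finite (↥(ball (SS k) (i : ℕ)) × ↥(ball (SS k) (n - (i : ℕ)))) := fun i =>
    inferInstance
  set φ : ball X n →
      (i : Fin (n + 1)) × (↥(ball (SS k) (i : ℕ)) × ↥(ball (SS k) (n - (i : ℕ)))) :=
    fun g =>
      ⟨⟨wordLength (SS k) g.1.1, by
          have hd := decompX hX (a := g.1.1) (b := g.1.2) g.2
          omega⟩,
        (⟨g.1.1, show wordLength (SS k) g.1.1 ≤ wordLength (SS k) g.1.1 from le_refl _⟩,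
          ⟨g.1.2, show wordLength (SS k) g.1.2 ≤ n - wordLength (SS k) g.1.1 by
            have hd := decompX hX (a := g.1.1) (b := g.1.2) g.2
            omega⟩)⟩ with hφ
  have hinj : Function.Injective φ := by
    intro a b h
    have h2 := congrArg (fun x : (i : Fin (n + 1)) ×
        (↥(ball (SS k) (i : ℕ)) × ↥(ball (SS k) (n - (i : ℕ)))) =>
      (((x.2.1 : FreeGroup (Fin k))), ((x.2.2 : FreeGroup (Fin k))))) h
    change (a.1.1, a.1.2) = (b.1.1, b.1.2) at h2
    apply Subtype.ext
    exact Prod.ext (congrArg Prod.fst h2) (congrArg Prod.snd h2)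
  have h1 := Nat.card_le_card_of_injective φ hinj
  rw [nat_card_sigma] at h1
  have h2 : ∀ i : Fin (n + 1),
      Nat.card (↥(ball (SS k) (i : ℕ)) × ↥(ball (SS k) (n - (i : ℕ)))) ≤
        16 * (2 * k - 1) ^ n := by
    intro i
    rw [Nat.card_prod]
    have ha := card_ballF_le hk (i : ℕ)
    have hb := card_ballF_le hk (n - (i : ℕ))
    calc Nat.card (ball (SS k) (i : ℕ)) * Nat.card (ball (SS k) (n - (i : ℕ)))
        ≤ (4 * (2 * k - 1) ^ (i : ℕ)) * (4 * (2 * k - 1) ^ (n - (i : ℕ))) :=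
          Nat.mul_le_mul ha hb
      _ = 16 * (2 * k - 1) ^ ((i : ℕ) + (n - (i : ℕ))) := by rw [pow_add]; ring
      _ = 16 * (2 * k - 1) ^ n := by
          have hlt := i.isLt
          have hin : (i : ℕ) + (n - (i : ℕ)) = n := by omega
          rw [hin]
  have h3 : ∑ i : Fin (n + 1),
      Nat.card (↥(ball (SS k) (i : ℕ)) × ↥(ball (SS k) (n - (i : ℕ)))) ≤
        ∑ _i : Fin (n + 1), 16 * (2 * k - 1) ^ n :=
    Finset.sum_le_sum fun i _ => h2 i
  rw [Finset.sum_const, Finset.card_univ, Fintype.card_fin, smul_eq_mul] at h3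
  calc Nat.card (ball X n) ≤ _ := h1
    _ ≤ (n + 1) * (16 * (2 * k - 1) ^ n) := h3
    _ = 16 * (n + 1) * (2 * k - 1) ^ n := by ring

lemma card_comm_ge (n : ℕ) :
    Nat.card (ball (SS k) n) ^ 2 ≤
      Nat.card {p : (FreeGroup (Fin k) × FreeGroup (Fin k)) ×
          (FreeGroup (Fin k) × FreeGroup (Fin k)) |
        p.1 ∈ ball X n ∧ p.2 ∈ ball X n ∧ p.1 * p.2 = p.2 * p.1} := by
  classical
  haveI : Finite {p : (FreeGroup (Fin k) × FreeGroup (Fin k)) ×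
      (FreeGroup (Fin k) × FreeGroup (Fin k)) |
      p.1 ∈ ball X n ∧ p.2 ∈ ball X n ∧ p.1 * p.2 = p.2 * p.1} := by
    apply Set.Finite.to_subtype
    apply Set.Finite.subset ((ballX_finite hX n).prod (ballX_finite hX n))
    rintro p ⟨h1, h2, -⟩
    exact ⟨h1, h2⟩
  set Φ : ↥(ball (SS k) n) × ↥(ball (SS k) n) →
      ↥{p : (FreeGroup (Fin k) × FreeGroup (Fin k)) ×
          (FreeGroup (Fin k) × FreeGroup (Fin k)) |
        p.1 ∈ ball X n ∧ p.2 ∈ ball X n ∧ p.1 * p.2 = p.2 * p.1} := fun ab =>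
    ⟨((((ab.1 : FreeGroup (Fin k))), 1), (1, ((ab.2 : FreeGroup (Fin k))))),
      ⟨left_mem_ballX hX ab.1.2, right_mem_ballX hX ab.2.2, by
        show ((_, _) : _ × _) * _ = _
        simp [Prod.ext_iff]⟩⟩ with hΦ
  have hinj : Function.Injective Φ := by
    intro a b h
    have h2 := congrArg (fun x : ↥{p : (FreeGroup (Fin k) × FreeGroup (Fin k)) ×
          (FreeGroup (Fin k) × FreeGroup (Fin k)) |
        p.1 ∈ ball X n ∧ p.2 ∈ ball X n ∧ p.1 * p.2 = p.2 * p.1} =>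
      ((x.1).1.1, (x.1).2.2)) h
    simp only [hΦ] at h2
    exact Prod.ext (Subtype.ext (congrArg Prod.fst h2))
      (Subtype.ext (congrArg Prod.snd h2))
  have h1 := Nat.card_le_card_of_injective Φ hinj
  rwa [Nat.card_prod, ← sq] at h1

end Main

theorem statement13 (k : ℕ) (hk : 2 ≤ k)
    (X : Set (FreeGroup (Fin k) × FreeGroup (Fin k)))
    (hX : X = (Set.range fun i : Fin k =>
          ((FreeGroup.of i : FreeGroup (Fin k)), (1 : FreeGroup (Fin k)))) ∪
        (Set.range fun i : Fin k =>
          ((1 : FreeGroup (Fin k)), (FreeGroup.of i : FreeGroup (Fin k))))) :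
    ∃ c : ℝ, 0 < c ∧ ∃ N : ℕ, ∀ n : ℕ, N ≤ n →
      c * (Nat.card (ball X n) : ℝ) ^ 2 / (n : ℝ) ^ 2 ≤
        (Nat.card {p : (FreeGroup (Fin k) × FreeGroup (Fin k)) ×
            (FreeGroup (Fin k) × FreeGroup (Fin k)) |
          p.1 ∈ ball X n ∧ p.2 ∈ ball X n ∧ p.1 * p.2 = p.2 * p.1} : ℝ) := by
  set q : ℕ := 2 * k - 1 with hqdef
  have hq3 : 3 ≤ q := by omega
  have hq0 : (0 : ℝ) < (q : ℝ) := by exact_mod_cast (by omega : 0 < q)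
  have hc : (0 : ℝ) < 1 / (1024 * (q : ℝ) ^ 2) := by
    apply div_pos one_pos
    apply mul_pos (by norm_num)
    exact pow_pos hq0 2
  refine ⟨1 / (1024 * (q : ℝ) ^ 2), hc, 1, fun n hn => ?_⟩
  obtain ⟨m, rfl⟩ : ∃ m, n = m + 1 := ⟨n - 1, by omega⟩
  have hA := card_ballX_le hX hk (m + 1)
  have hC := card_comm_ge hX (m + 1)
  have hb := card_ballF_ge (show 1 ≤ k by omega) m
  rw [← hqdef] at hA hb
  have hAr : ((Nat.card (ball X (m + 1)) : ℕ) : ℝ) ≤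
      16 * ((m : ℝ) + 2) * (q : ℝ) ^ (m + 1) := by exact_mod_cast hA
  have hCnat : q ^ m * q ^ m ≤ Nat.card {p : (FreeGroup (Fin k) × FreeGroup (Fin k)) ×
      (FreeGroup (Fin k) × FreeGroup (Fin k)) |
      p.1 ∈ ball X (m + 1) ∧ p.2 ∈ ball X (m + 1) ∧ p.1 * p.2 = p.2 * p.1} := by
    calc q ^ m * q ^ m ≤ Nat.card (ball (SS k) (m + 1)) * Nat.card (ball (SS k) (m + 1)) :=
          Nat.mul_le_mul hb hb
      _ = Nat.card (ball (SS k) (m + 1)) ^ 2 := (sq _).symm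
      _ ≤ _ := hC
  have hCr : ((q : ℝ) ^ m) * ((q : ℝ) ^ m) ≤
      ((Nat.card {p : (FreeGroup (Fin k) × FreeGroup (Fin k)) ×
        (FreeGroup (Fin k) × FreeGroup (Fin k)) |
        p.1 ∈ ball X (m + 1) ∧ p.2 ∈ ball X (m + 1) ∧ p.1 * p.2 = p.2 * p.1} : ℕ) : ℝ) := by
    exact_mod_cast hCnat
  have hA0 : (0 : ℝ) ≤ ((Nat.card (ball X (m + 1)) : ℕ) : ℝ) := Nat.cast_nonneg _
  have hm1 : (0 : ℝ) < ((m + 1 : ℕ) : ℝ) := by exact_mod_cast Nat.succ_pos m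
  rw [div_le_iff₀ (by positivity)]
  set C : ℝ := ((Nat.card {p : (FreeGroup (Fin k) × FreeGroup (Fin k)) ×
      (FreeGroup (Fin k) × FreeGroup (Fin k)) |
      p.1 ∈ ball X (m + 1) ∧ p.2 ∈ ball X (m + 1) ∧ p.1 * p.2 = p.2 * p.1} : ℕ) : ℝ)
  calc 1 / (1024 * (q : ℝ) ^ 2) * ((Nat.card (ball X (m + 1)) : ℕ) : ℝ) ^ 2
      ≤ 1 / (1024 * (q : ℝ) ^ 2) * (16 * ((m : ℝ) + 2) * (q : ℝ) ^ (m + 1)) ^ 2 := by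
        apply mul_le_mul_of_nonneg_left _ hc.le
        exact pow_le_pow_left₀ hA0 hAr 2
    _ = ((m : ℝ) + 2) ^ 2 * ((q : ℝ) ^ m * (q : ℝ) ^ m) / 4 := by
        field_simp
        ring
    _ ≤ ((m : ℝ) + 1) ^ 2 * ((q : ℝ) ^ m * (q : ℝ) ^ m) := by
        have hqm : (0 : ℝ) ≤ (q : ℝ) ^ m * (q : ℝ) ^ m := by positivity
        have hm0 : (0 : ℝ) ≤ (m : ℝ) := Nat.cast_nonneg _
        rw [div_le_iff₀ (by norm_num : (0:ℝ) < 4)]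
        nlinarith [mul_nonneg (mul_nonneg hm0 hm0) hqm, mul_nonneg hm0 hqm]
    _ ≤ ((m : ℝ) + 1) ^ 2 * C := by
        apply mul_le_mul_of_nonneg_left hCr (by positivity)
    _ = C * ((m + 1 : ℕ) : ℝ) ^ 2 := by push_cast; ring
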